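/- Let I = (G,T,p) be a Directed Multiway Cut instance and Z ⊆ V(G)\T. Let G' = torso(G, V(G)\Z). If S ⊆ V(G') is a multiway cut of (G',T), then S is also a multiway cut of (G,T). -/

import Mathlib

variable {V : Type*}

/-- A single edge step in `G \ S`: an edge of `E` with both endpoints outside `S`. -/
def DStep (E : V → V → Prop) (S : Set V) (a b : V) : Prop :=
  E a b ∧ a ∉ S ∧ b ∉ S

/-- `b` is reachable from `a` by a directed path in `G \ S`. -/
def DReach (E : V → V → Prop) (S : Set V) (a b : V) : Prop :=
  Relation.ReflTransGen (DStep E S) a b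

/-- The set of vertices reachable from the set `X` in `G \ S`. -/
def RSet (E : V → V → Prop) (S X : Set V) : Set V :=
  {v | ∃ x ∈ X, DReach E S x v}

/-- `S` is an `X`–`Y` separator: disjoint from `X ∪ Y` and destroying all `X → Y` paths. -/
def IsSep (E : V → V → Prop) (X Y S : Set V) : Prop :=
  S ∩ (X ∪ Y) = ∅ ∧ ∀ x ∈ X, ∀ y ∈ Y, ¬ DReach E S x y

/-- `S` is an inclusion-wise minimal `X`–`Y` separator. -/
def IsMinSep (E : V → V → Prop) (X Y S : Set V) : Prop :=
  IsSep E X Y S ∧ ∀ S', S' ⊂ S → ¬ IsSep E X Y S'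

/-- `S` is an important `X`–`Y` separator: a minimal separator such that no separator of at
most the same size has a strictly larger set of vertices reachable from `X`. -/
def IsImpSep (E : V → V → Prop) (X Y S : Set V) : Prop :=
  IsMinSep E X Y S ∧
    ¬ ∃ S', IsSep E X Y S' ∧ S'.ncard ≤ S.ncard ∧ RSet E S X ⊂ RSet E S' X

/-- `S` is a (vertex) multiway cut of `(G, T)`. -/
def IsMWC (E : V → V → Prop) (T S : Set V) : Prop :=
  S ∩ T = ∅ ∧ ∀ t₁ ∈ T, ∀ t₂ ∈ T, t₁ ≠ t₂ → ¬ DReach E S t₁ t₂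

/-- The forward shadow of `S` with respect to `T`: vertices outside `S ∪ T` not reachable
from `T` in `G \ S`. -/
def fShadow (E : V → V → Prop) (T S : Set V) : Set V :=
  {v | v ∉ S ∧ v ∉ T ∧ ∀ t ∈ T, ¬ DReach E S t v}

/-- The reverse shadow of `S` with respect to `T`: vertices outside `S ∪ T` that cannot
reach `T` in `G \ S`. -/
def rShadow (E : V → V → Prop) (T S : Set V) : Set V :=
  {v | v ∉ S ∧ v ∉ T ∧ ∀ t ∈ T, ¬ DReach E S v t}

/-- The adjacency of `torso(G, C)`: an edge `(a, b)` whenever `a, b ∈ C` and `G` has a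
directed `a → b` path whose internal vertices all lie outside `C`. -/
def TorsoAdj (E : V → V → Prop) (C : Set V) (a b : V) : Prop :=
  a ∈ C ∧ b ∈ C ∧ ∃ w, E a w ∧ Relation.ReflTransGen (fun x y => x ∉ C ∧ E x y) w b


lemma torso_aux (E : V → V → Prop) (S C : Set V) {w b : V}
    (hb : b ∈ C) (hbS : b ∉ S) (h : Relation.ReflTransGen (DStep E S) w b) :
    (w ∈ C → Relation.ReflTransGen (DStep (TorsoAdj E C) S) w b) ∧
    (w ∉ C → ∃ c ∈ C, c ∉ S ∧
      Relation.ReflTransGen (fun x y => x ∉ C ∧ E x y) w c ∧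
      Relation.ReflTransGen (DStep (TorsoAdj E C) S) c b) := by
  induction h using Relation.ReflTransGen.head_induction_on with
  | refl => exact ⟨fun _ => .refl, fun _ => ⟨b, hb, hbS, .refl, .refl⟩⟩
  | head hstep _ ih =>
    obtain ⟨hE, hwS, hyS⟩ := hstep
    rename_i w y _
    by_cases hy : y ∈ C
    · have hy' := ih.1 hy
      refine ⟨fun hw => .head ⟨⟨hw, hy, y, hE, .refl⟩, hwS, hyS⟩ hy',
        fun hw => ⟨y, hy, hyS, .single ⟨hw, hE⟩, hy'⟩⟩
    · obtain ⟨c, hc, hcS, hpath, hreach⟩ := ih.2 hy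
      refine ⟨fun hw => .head ⟨⟨hw, hc, y, hE, hpath⟩, hwS, hcS⟩ hreach,
        fun hw => ⟨c, hc, hcS, .head ⟨hw, hE⟩ hpath, hreach⟩⟩

/-- Any multiway cut of the torso instance `(torso(G, V∖Z), T)` is also a
multiway cut of the original instance `(G, T)`. -/
theorem torso_solution_is_solution (E : V → V → Prop) (T Z S : Set V)
    (hZT : Z ∩ T = ∅) (hSZ : S ∩ Z = ∅)
    (h : IsMWC (TorsoAdj E Zᶜ) T S) :
    IsMWC E T S := by
  obtain ⟨hST, hsep⟩ := h
  refine ⟨hST, fun t₁ h₁ t₂ h₂ hne hr => hsep t₁ h₁ t₂ h₂ hne ?_⟩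
  have h₁C : t₁ ∈ Zᶜ := fun hz => Set.eq_empty_iff_forall_notMem.mp hZT t₁ ⟨hz, h₁⟩
  have h₂C : t₂ ∈ Zᶜ := fun hz => Set.eq_empty_iff_forall_notMem.mp hZT t₂ ⟨hz, h₂⟩
  have h₂S : t₂ ∉ S := fun hs => Set.eq_empty_iff_forall_notMem.mp hST t₂ ⟨hs, h₂⟩
  exact (torso_aux E S Zᶜ h₂C h₂S hr).1 h₁C
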